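/- For every natural number k there exists a finite set T together with an irreflexive and antisymmetric relation R on T (i.e., R(a,a) holds for no a, and R(a,b) and R(b,a) never both hold for a ≠ b) such that every k-sparse simple graph G = (V,E) admits an orientation f of G that is bounded by k and a map h : V → T with the following property: for every edge {u,v} of G with f({u,v}) = v and u ≠ v, the pair (h(u), h(v)) belongs to R. -/

import Mathlib

/-- Greedy + compactness coloring lemma for the "directed 2-path" relation of a
digraph (given by `head`/`tail` maps on an edge type) with in-degrees bounded by `k`. -/
theorem aux_two_path_coloring {V E : Type*} (k : ℕ) (head tail : E → V)
    (hfib : ∀ a : V, {e : E | head e = a}.Finite)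
    (hfibcard : ∀ a : V, {e : E | head e = a}.ncard ≤ k)
    (hno2 : ∀ e₁ e₂ : E, head e₁ = tail e₂ → tail e₁ ≠ head e₂) :
    ∃ c : V → Fin (2 * k * k + 1), ∀ e₁ e₂ : E, head e₁ = tail e₂ →
      c (tail e₁) ≠ c (head e₂) := by
  classical
  set N := 2 * k * k + 1 with hN
  -- the symmetric "2-path" relation
  set A : V → V → Prop := fun x y =>
    (∃ e₁ e₂ : E, head e₁ = tail e₂ ∧ tail e₁ = x ∧ head e₂ = y) ∨
    (∃ e₁ e₂ : E, head e₁ = tail e₂ ∧ tail e₁ = y ∧ head e₂ = x) with hA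
  have hAsymm : ∀ x y, A x y → A y x := fun x y h => h.symm
  have hAirr : ∀ x, ¬ A x x := by
    rintro x (⟨e₁, e₂, h1, h2, h3⟩ | ⟨e₁, e₂, h1, h2, h3⟩) <;>
      exact hno2 e₁ e₂ h1 (h2.trans h3.symm)
  -- in-edge finsets
  set FibF : V → Finset E := fun a => (hfib a).toFinset with hFibF
  have hFibcard : ∀ a, (FibF a).card ≤ k := by
    intro a
    have := hfibcard a
    rwa [Set.ncard_eq_toFinset_card _ (hfib a)] at this
  -- vertices with a 2-path into `y`
  set Xset : V → Finset V := fun y =>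
    (FibF y).biUnion fun e₂ => (FibF (tail e₂)).image tail with hXset
  have hXcard : ∀ y, (Xset y).card ≤ k * k := by
    intro y
    refine Finset.card_biUnion_le.trans ?_
    calc ∑ e₂ ∈ FibF y, ((FibF (tail e₂)).image tail).card
        ≤ ∑ _e₂ ∈ FibF y, k :=
          Finset.sum_le_sum fun e₂ _ => (Finset.card_image_le).trans (hFibcard _)
      _ = (FibF y).card * k := by rw [Finset.sum_const, smul_eq_mul]
      _ ≤ k * k := Nat.mul_le_mul_right k (hFibcard y)
  have hXmem : ∀ x y, (∃ e₁ e₂ : E, head e₁ = tail e₂ ∧ tail e₁ = x ∧ head e₂ = y) →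
      x ∈ Xset y := by
    rintro x y ⟨e₁, e₂, h1, h2, h3⟩
    refine Finset.mem_biUnion.mpr ⟨e₂, ?_, ?_⟩
    · simp [hFibF, Set.Finite.mem_toFinset, h3]
    · refine Finset.mem_image.mpr ⟨e₁, ?_, h2⟩
      simp [hFibF, Set.Finite.mem_toFinset, h1]
  -- min-degree bound on every finite set
  have deg : ∀ Y : Finset V, Y.Nonempty →
      ∃ y ∈ Y, (Y.filter fun x => A x y).card ≤ 2 * k * k := by
    intro Y hY
    by_contra hcon
    push_neg at hcon
    set P := (Y ×ˢ Y).filter (fun p => A p.1 p.2) with hP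
    have hcardP : P.card = ∑ y ∈ Y, (P.filter fun p => p.2 = y).card :=
      Finset.card_eq_sum_card_fiberwise fun p hp =>
        (Finset.mem_product.mp (Finset.mem_filter.mp hp).1).2
    have hfiber : ∀ y ∈ Y, (P.filter fun p => p.2 = y).card
        = (Y.filter fun x => A x y).card := by
      intro y hy
      refine Finset.card_bij' (fun p _ => p.1) (fun x _ => (x, y)) ?_ ?_ ?_ ?_
      · intro p hp
        simp only [Finset.mem_filter, Finset.mem_product, hP] at hp ⊢
        obtain ⟨⟨⟨h1, h2⟩, h3⟩, h4⟩ := hp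
        exact ⟨h1, by rwa [h4] at h3⟩
      · intro x hx
        simp only [Finset.mem_filter, Finset.mem_product, hP] at hx ⊢
        exact ⟨⟨⟨hx.1, hy⟩, hx.2⟩, trivial⟩
      · intro p hp
        simp only [Finset.mem_filter, hP] at hp
        exact Prod.ext rfl hp.2.symm
      · intro x _; rfl
    have hlow : N * Y.card ≤ P.card := by
      rw [hcardP]
      calc N * Y.card = ∑ _y ∈ Y, N := by rw [Finset.sum_const, smul_eq_mul, Nat.mul_comm]
        _ ≤ ∑ y ∈ Y, (P.filter fun p => p.2 = y).card := by
            refine Finset.sum_le_sum fun y hy => ?_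
            rw [hfiber y hy]
            have := hcon y hy
            omega
    have hup : P.card ≤ 2 * k * k * Y.card := by
      have hsub : P ⊆ (Y.biUnion fun y => (Xset y) ×ˢ ({y} : Finset V)) ∪
          (Y.biUnion fun x => ({x} : Finset V) ×ˢ Xset x) := by
        intro p hp
        simp only [Finset.mem_filter, Finset.mem_product, hP] at hp
        obtain ⟨⟨h1, h2⟩, h3⟩ := hp
        rcases h3 with h | h
        · refine Finset.mem_union_left _ (Finset.mem_biUnion.mpr ⟨p.2, h2, ?_⟩)
          exact Finset.mem_product.mpr ⟨hXmem _ _ h, Finset.mem_singleton_self _⟩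
        · refine Finset.mem_union_right _ (Finset.mem_biUnion.mpr ⟨p.1, h1, ?_⟩)
          exact Finset.mem_product.mpr ⟨Finset.mem_singleton_self _, hXmem _ _ h⟩
      have h1 : (Y.biUnion fun y => (Xset y) ×ˢ ({y} : Finset V)).card ≤ k * k * Y.card := by
        refine Finset.card_biUnion_le.trans ?_
        calc ∑ y ∈ Y, ((Xset y) ×ˢ ({y} : Finset V)).card
            ≤ ∑ _y ∈ Y, k * k := by
              refine Finset.sum_le_sum fun y _ => ?_
              rw [Finset.card_product, Finset.card_singleton, Nat.mul_one]
              exact hXcard y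
          _ = k * k * Y.card := by rw [Finset.sum_const, smul_eq_mul, Nat.mul_comm]
      have h2 : (Y.biUnion fun x => ({x} : Finset V) ×ˢ Xset x).card ≤ k * k * Y.card := by
        refine Finset.card_biUnion_le.trans ?_
        calc ∑ x ∈ Y, (({x} : Finset V) ×ˢ Xset x).card
            ≤ ∑ _x ∈ Y, k * k := by
              refine Finset.sum_le_sum fun x _ => ?_
              rw [Finset.card_product, Finset.card_singleton, Nat.one_mul]
              exact hXcard x
          _ = k * k * Y.card := by rw [Finset.sum_const, smul_eq_mul, Nat.mul_comm]
      calc P.card ≤ _ := Finset.card_le_card hsub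
        _ ≤ _ + _ := Finset.card_union_le _ _
        _ ≤ k * k * Y.card + k * k * Y.card := Nat.add_le_add h1 h2
        _ = 2 * k * k * Y.card := by ring
    have hpos : 0 < Y.card := hY.card_pos
    have : N * Y.card ≤ 2 * k * k * Y.card := hlow.trans hup
    rw [hN] at this
    nlinarith
  -- greedy coloring of finite sets
  have hNpos : 0 < N := by omega
  have greedy : ∀ (m : ℕ) (Y : Finset V), Y.card ≤ m →
      ∃ c : V → Fin N, ∀ x ∈ Y, ∀ y ∈ Y, A x y → c x ≠ c y := by
    intro m
    induction m with
    | zero =>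
      intro Y hY
      have : Y = ∅ := Finset.card_eq_zero.mp (Nat.le_antisymm hY (Nat.zero_le _))
      subst this
      exact ⟨fun _ => ⟨0, hNpos⟩, by simp⟩
    | succ m ih =>
      intro Y hY
      rcases Y.eq_empty_or_nonempty with rfl | hne
      · exact ⟨fun _ => ⟨0, hNpos⟩, by simp⟩
      obtain ⟨y, hyY, hdeg⟩ := deg Y hne
      obtain ⟨c0, hc0⟩ := ih (Y.erase y) (by
        rw [Finset.card_erase_of_mem hyY]; omega)
      set F := ((Y.erase y).filter fun x => A x y).image c0 with hF
      have hFcard : F.card < N := by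
        have h1 : F.card ≤ ((Y.erase y).filter fun x => A x y).card :=
          Finset.card_image_le
        have h2 : ((Y.erase y).filter fun x => A x y).card
            ≤ (Y.filter fun x => A x y).card :=
          Finset.card_le_card (Finset.filter_subset_filter _ (Finset.erase_subset _ _))
        omega
      have hex : ∃ col : Fin N, col ∉ F := by
        by_contra hall
        push_neg at hall
        have : (Finset.univ : Finset (Fin N)) ⊆ F := fun x _ => hall x
        have := Finset.card_le_card this
        rw [Finset.card_univ, Fintype.card_fin] at this
        omega
      obtain ⟨col, hcol⟩ := hex
      refine ⟨Function.update c0 y col, ?_⟩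
      intro x hx z hz hAxz
      by_cases hxy : x = y <;> by_cases hzy : z = y
      · subst hxy; subst hzy; exact absurd hAxz (hAirr _)
      · subst hxy
        rw [Function.update_self, Function.update_of_ne hzy]
        intro hcc
        exact hcol (hcc ▸ Finset.mem_image_of_mem c0 (Finset.mem_filter.mpr
          ⟨Finset.mem_erase.mpr ⟨hzy, hz⟩, hAsymm _ _ hAxz⟩))
      · subst hzy
        rw [Function.update_self, Function.update_of_ne hxy]
        intro hcc
        exact hcol (hcc ▸ Finset.mem_image_of_mem c0 (Finset.mem_filter.mpr
          ⟨Finset.mem_erase.mpr ⟨hxy, hx⟩, hAxz⟩))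
      · rw [Function.update_of_ne hxy, Function.update_of_ne hzy]
        exact hc0 x (Finset.mem_erase.mpr ⟨hxy, hx⟩) z (Finset.mem_erase.mpr ⟨hzy, hz⟩) hAxz
  -- compactness
  letI : TopologicalSpace (Fin N) := ⊥
  haveI : DiscreteTopology (Fin N) := ⟨rfl⟩
  have key : ∃ c : V → Fin N, ∀ x y, A x y → c x ≠ c y := by
    set C : Finset V → Set (V → Fin N) := fun Y =>
      {c | ∀ x ∈ Y, ∀ y ∈ Y, A x y → c x ≠ c y} with hC
    have hdir : Directed (· ⊇ ·) C := by
      intro Y Z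
      refine ⟨Y ∪ Z, fun c hc x hx y hy hxy => ?_, fun c hc x hx y hy hxy => ?_⟩ <;>
        exact hc x (Finset.mem_union.mpr (by tauto)) y (Finset.mem_union.mpr (by tauto)) hxy
    have hnonempty : ∀ Y, (C Y).Nonempty := by
      intro Y
      obtain ⟨c, hc⟩ := greedy Y.card Y le_rfl
      exact ⟨c, hc⟩
    have hclosed : ∀ Y, IsClosed (C Y) := by
      intro Y
      have : C Y = ⋂ x ∈ Y, ⋂ y ∈ Y, ⋂ (_ : A x y), {c : V → Fin N | c x ≠ c y} := by
        ext c; simp [hC]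
      rw [this]
      refine isClosed_biInter fun x _ => isClosed_biInter fun y _ => isClosed_iInter fun _ => ?_
      have : {c : V → Fin N | c x ≠ c y}
          = (fun c : V → Fin N => (c x, c y)) ⁻¹' {p | p.1 ≠ p.2} := rfl
      rw [this]
      exact IsClosed.preimage (Continuous.prodMk (continuous_apply x) (continuous_apply y))
        (isClosed_discrete _)
    have hcompact : ∀ Y, IsCompact (C Y) := fun Y => (hclosed Y).isCompact
    obtain ⟨c, hc⟩ := IsCompact.nonempty_iInter_of_directed_nonempty_isCompact_isClosed
      C hdir hnonempty hcompact hclosed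
    refine ⟨c, fun x y hxy => ?_⟩
    have := Set.mem_iInter.mp hc {x, y}
    exact this x (by simp) y (by simp) hxy
  obtain ⟨c, hc⟩ := key
  exact ⟨c, fun e₁ e₂ h => hc _ _ (Or.inl ⟨e₁, e₂, h, rfl, rfl⟩)⟩

/-- For every `k` there is a finite directed graph `(Fin n, R)` with irreflexive and
antisymmetric edge relation such that every `k`-sparse simple graph `G` admits an
orientation `f` bounded by `k` together with a map `h : V → Fin n` which is a
homomorphism from the directed graph `G_f` into `(Fin n, R)`. -/
theorem exists_target_for_k_sparse_orientations (k : ℕ) :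
    ∃ (n : ℕ) (R : Fin n → Fin n → Prop),
      (∀ a, ¬ R a a) ∧
      (∀ a b, a ≠ b → ¬ (R a b ∧ R b a)) ∧
      ∀ (V : Type*) (G : SimpleGraph V),
        (∀ X : Finset V,
            {e ∈ G.edgeSet | ∀ v ∈ e, v ∈ X}.Finite ∧
              {e ∈ G.edgeSet | ∀ v ∈ e, v ∈ X}.ncard ≤ k * X.card) →
        ∃ (f : G.edgeSet → V) (h : V → Fin n),
          (∀ e : G.edgeSet, f e ∈ e.val) ∧
          (∀ a : V, {e : G.edgeSet | f e = a}.Finite ∧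
            {e : G.edgeSet | f e = a}.ncard ≤ k) ∧
          ∀ (u v : V) (huv : G.Adj u v),
            f ⟨s(u, v), G.mem_edgeSet.mpr huv⟩ = v → u ≠ v → R (h u) (h v) := by
  classical
  set N := 2 * k * k + 1 with hN
  set n := Fintype.card (Fin N × Finset (Fin N)) with hn
  set eqv : (Fin N × Finset (Fin N)) ≃ Fin n := Fintype.equivFin _ with heqv
  refine ⟨n, fun a b => (eqv.symm a).1 ∈ (eqv.symm b).2 ∧ (eqv.symm b).1 ∉ (eqv.symm a).2,
    ?_, ?_, ?_⟩
  · rintro a ⟨h1, h2⟩; exact h2 h1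
  · rintro a b _ ⟨⟨h1, h2⟩, h3, h4⟩; exact h2 h3
  intro V G hsp
  -- the finset of endpoints of an edge
  set endF : Sym2 V → Finset V :=
    Sym2.lift ⟨fun a b => {a, b}, fun a b => Finset.pair_comm a b⟩ with hendFdef
  have hendF : ∀ (z : Sym2 V) (v : V), v ∈ endF z ↔ v ∈ z := by
    intro z v
    induction z using Sym2.ind with
    | _ a b => simp [hendFdef, Sym2.mem_iff]
  -- Hall's theorem gives the bounded orientation
  set t : G.edgeSet → Finset (V × Fin k) := fun e => endF e.val ×ˢ Finset.univ with ht
  have hHall : ∀ s : Finset G.edgeSet, s.card ≤ (s.biUnion t).card := by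
    intro s
    set X := s.biUnion (fun e => endF e.val) with hX
    have h1 : s.biUnion t = X ×ˢ (Finset.univ : Finset (Fin k)) := by
      ext p
      simp only [Finset.mem_biUnion, Finset.mem_product, hX, ht, Finset.mem_univ, and_true]
    rw [h1, Finset.card_product, Finset.card_univ, Fintype.card_fin]
    have h2 : s.card = (s.image Subtype.val).card :=
      (Finset.card_image_of_injective s Subtype.val_injective).symm
    have h3 : ((s.image Subtype.val : Finset (Sym2 V)) : Set (Sym2 V))
        ⊆ {e ∈ G.edgeSet | ∀ v ∈ e, v ∈ X} := by
      intro z hz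
      simp only [Finset.coe_image, Set.mem_image, Finset.mem_coe] at hz
      obtain ⟨e, he, rfl⟩ := hz
      exact ⟨e.2, fun v hv => Finset.mem_biUnion.mpr ⟨e, he, (hendF _ v).mpr hv⟩⟩
    calc s.card = (s.image Subtype.val).card := h2
      _ = ((s.image Subtype.val : Finset (Sym2 V)) : Set (Sym2 V)).ncard :=
          (Set.ncard_coe_finset _).symm
      _ ≤ {e ∈ G.edgeSet | ∀ v ∈ e, v ∈ X}.ncard := Set.ncard_le_ncard h3 (hsp X).1
      _ ≤ k * X.card := (hsp X).2
      _ = X.card * k := Nat.mul_comm _ _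
  obtain ⟨g, hginj, hgmem⟩ := (Finset.all_card_le_biUnion_card_iff_exists_injective t).mp hHall
  set f : G.edgeSet → V := fun e => (g e).1 with hf
  have hfmem : ∀ e, f e ∈ e.val := by
    intro e
    have h0 := hgmem e
    rw [ht, Finset.mem_product] at h0
    exact (hendF _ _).mp h0.1
  -- finiteness of the vertical fiber in the product
  have heqfun : ∀ a : V, {p : V × Fin k | p.1 = a} = Prod.mk a '' Set.univ := by
    intro a
    ext ⟨p1, p2⟩
    constructor
    · intro hp
      simp only [Set.mem_setOf_eq] at hp
      subst hp
      exact ⟨p2, trivial, rfl⟩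
    · rintro ⟨b, -, hb⟩
      rw [← hb]
      exact rfl
  have hfin : ∀ a : V, {p : V × Fin k | p.1 = a}.Finite := by
    intro a
    rw [heqfun a]
    exact Set.finite_univ.image _
  have hfincard : ∀ a : V, {p : V × Fin k | p.1 = a}.ncard ≤ k := by
    intro a
    rw [heqfun a, Set.ncard_image_of_injective _ (Prod.mk_right_injective a), Set.ncard_univ]
    simp
  have hfibfin : ∀ a : V, {e : G.edgeSet | f e = a}.Finite := by
    intro a
    have hsub : {e : G.edgeSet | f e = a} ⊆ g ⁻¹' {p : V × Fin k | p.1 = a} :=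
      fun e he => he
    exact (Set.Finite.preimage hginj.injOn (hfin a)).subset hsub
  have hfibcard : ∀ a : V, {e : G.edgeSet | f e = a}.ncard ≤ k := by
    intro a
    have h1 : {e : G.edgeSet | f e = a}.ncard = (g '' {e | f e = a}).ncard :=
      (Set.ncard_image_of_injective _ hginj).symm
    have hsub : g '' {e : G.edgeSet | f e = a} ⊆ {p : V × Fin k | p.1 = a} := by
      rintro p ⟨e, he, rfl⟩; exact he
    rw [h1]
    exact (Set.ncard_le_ncard hsub (hfin a)).trans (hfincard a)
  -- tail of each oriented edge
  set tl : G.edgeSet → V := fun e => Sym2.Mem.other' (hfmem e) with htl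
  have htl_spec : ∀ e, s(f e, tl e) = e.val := fun e => Sym2.other_spec' (hfmem e)
  have htl_ne : ∀ e, tl e ≠ f e := by
    intro e
    rw [htl]
    simp only
    rw [← Sym2.other_eq_other' (hfmem e)]
    exact Sym2.other_ne (G.not_isDiag_of_mem_edgeSet e.2) (hfmem e)
  have hno2 : ∀ e₁ e₂ : G.edgeSet, f e₁ = tl e₂ → tl e₁ ≠ f e₂ := by
    intro e₁ e₂ h1 h2
    have hval : e₁.val = e₂.val := by
      rw [← htl_spec e₁, ← htl_spec e₂, h1, h2, Sym2.eq_swap]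
    have heq : e₁ = e₂ := Subtype.ext hval
    subst heq
    exact htl_ne e₁ h1.symm
  -- the 2-path coloring
  obtain ⟨c, hc⟩ := aux_two_path_coloring k f tl hfibfin hfibcard hno2
  set S : V → Finset (Fin N) := fun a => (hfibfin a).toFinset.image (fun e => c (tl e))
    with hS
  set h : V → Fin n := fun v => eqv (c v, S v) with hh
  refine ⟨f, h, hfmem, fun a => ⟨hfibfin a, hfibcard a⟩, ?_⟩
  intro u v huv hfe hune
  set e : G.edgeSet := ⟨s(u, v), G.mem_edgeSet.mpr huv⟩ with he
  have htlu : tl e = u := by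
    have h1 : s(f e, tl e) = s(u, v) := htl_spec e
    rw [hfe] at h1
    rcases Sym2.eq_iff.mp h1 with ⟨h2, h3⟩ | ⟨h2, h3⟩
    · exact absurd h2.symm hune
    · exact h3
  show (eqv.symm (h u)).1 ∈ (eqv.symm (h v)).2 ∧ (eqv.symm (h v)).1 ∉ (eqv.symm (h u)).2
  rw [hh]
  simp only [Equiv.symm_apply_apply]
  constructor
  · refine Finset.mem_image.mpr ⟨e, ?_, by rw [htlu]⟩
    rw [Set.Finite.mem_toFinset]
    exact hfe
  · intro hmem
    obtain ⟨e', he', hce'⟩ := Finset.mem_image.mp hmem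
    rw [Set.Finite.mem_toFinset] at he'
    exact hc e' e (he'.trans htlu.symm) (hce'.trans (by rw [hfe]))
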